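/- For any rim-hook h of a partition λ corresponding to the cell (i,j), the set of contents {c(u) : u ∈ h} equals the integer interval {j - λ'_j, j - λ'_j + 1, …, λ_i - i}. -/

import Mathlib

abbrev Cell := ℕ × ℕ

def nC (u : Cell) : Cell := (u.1 - 1, u.2)
def eC (u : Cell) : Cell := (u.1, u.2 + 1)
def sC (u : Cell) : Cell := (u.1 + 1, u.2)
def wC (u : Cell) : Cell := (u.1, u.2 - 1)
def seC (u : Cell) : Cell := (u.1 + 1, u.2 + 1)

/-- `lam i` is the `i`-th part (1-indexed); weakly decreasing with finitely many nonzero parts. -/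
def IsPartition (lam : ℕ → ℕ) : Prop :=
  (∀ i, lam (i + 1) ≤ lam i) ∧ (∃ N, ∀ i, N ≤ i → lam i = 0)

/-- The Young diagram of `lam`: cells `(i,j)` with `1 ≤ i`, `1 ≤ j ≤ lam i`. -/
def cells (lam : ℕ → ℕ) : Set Cell := {u | 1 ≤ u.1 ∧ 1 ≤ u.2 ∧ u.2 ≤ lam u.1}

/-- The conjugate partition. -/
noncomputable def conj (lam : ℕ → ℕ) (j : ℕ) : ℕ := {i | 1 ≤ i ∧ j ≤ lam i}.ncard

def content (u : Cell) : ℤ := (u.2 : ℤ) - (u.1 : ℤ)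

/-- Hook length of the cell `u = (i,j)`: `lam i + lam' j - i - j + 1`. -/
noncomputable def hookLen (lam : ℕ → ℕ) (u : Cell) : ℕ := lam u.1 + conj lam u.2 - u.1 - u.2 + 1

/-- A North-East path in `lam`. -/
def IsNEPath (lam : ℕ → ℕ) (P : List Cell) : Prop :=
  P ≠ [] ∧ (∀ u ∈ P, u ∈ cells lam) ∧ List.Chain' (fun u v => v = nC u ∨ v = eC u) P

/-- Head of a path. -/
def hd (P : List Cell) : Cell := P.headD (0, 0)
/-- Tail (last cell) of a path. -/
def lst (P : List Cell) : Cell := P.getLastD (0, 0)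
/-- Length of a path (number of steps). -/
def len (P : List Cell) : ℕ := P.length - 1

/-- A rim-hook of `lam`. -/
def IsRimHook (lam : ℕ → ℕ) (h : List Cell) : Prop :=
  IsNEPath lam h ∧ sC (hd h) ∉ cells lam ∧ eC (lst h) ∉ cells lam ∧
    ∀ u ∈ h, seC u ∉ cells lam

def IsOuterCorner (lam : ℕ → ℕ) (u : Cell) : Prop :=
  u ∈ cells lam ∧ eC u ∉ cells lam ∧ sC u ∉ cells lam

def IsInnerCorner (lam : ℕ → ℕ) (u : Cell) : Prop :=
  u ∈ cells lam ∧ eC u ∈ cells lam ∧ sC u ∈ cells lam ∧ seC u ∉ cells lam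

def IsCornerContent (lam : ℕ → ℕ) (z : ℤ) : Prop :=
  ∃ v, (IsInnerCorner lam v ∨ IsOuterCorner lam v) ∧ content v = z

/-- Cells whose content is the content of an inner corner. -/
def regionI (lam : ℕ → ℕ) : Set Cell :=
  {u ∈ cells lam | ∃ v, IsInnerCorner lam v ∧ content v = content u}

/-- Cells whose content is the content of an outer corner. -/
def regionO (lam : ℕ → ℕ) : Set Cell :=
  {u ∈ cells lam | ∃ v, IsOuterCorner lam v ∧ content v = content u}

/-- Cells with `c(u) < o_1` or `i_k < c(u) < o_{k+1}`: the content is not a corner content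
and the largest corner content below it (if any) is an inner-corner content. -/
def regionA (lam : ℕ → ℕ) : Set Cell :=
  {u ∈ cells lam | ¬ IsCornerContent lam (content u) ∧
    ∀ w, IsOuterCorner lam w → content w < content u →
      ∃ v, IsInnerCorner lam v ∧ content w < content v ∧ content v < content u}

/-- Cells with `o_k < c(u) < i_k` or `o_{r+1} < c(u)`: the remaining cells. -/
def regionB (lam : ℕ → ℕ) : Set Cell :=
  cells lam \ (regionI lam ∪ regionO lam ∪ regionA lam)

/-- A reverse plane partition of shape `lam`, as a function vanishing outside `lam`
which is weakly increasing along rows and columns. -/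
def IsRPP (lam : ℕ → ℕ) (π : Cell → ℕ) : Prop :=
  (∀ u, u ∉ cells lam → π u = 0) ∧
  (∀ u ∈ cells lam, eC u ∈ cells lam → π u ≤ π (eC u)) ∧
  (∀ u ∈ cells lam, sC u ∈ cells lam → π u ≤ π (sC u))

/-- `π + P`: increase by one along the path. -/
def addPath (π : Cell → ℕ) (P : List Cell) : Cell → ℕ :=
  fun u => if u ∈ P then π u + 1 else π u

/-- `π - P`: decrease by one along the path. -/
def subPath (π : Cell → ℕ) (P : List Cell) : Cell → ℕ :=
  fun u => if u ∈ P then π u - 1 else π u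

/-- The path `P` is `π`-compatible. -/
def Compatible (lam : ℕ → ℕ) (π : Cell → ℕ) (P : List Cell) : Prop :=
  (∀ u ∈ P, u ∈ regionI lam ∪ regionA lam → eC u ∈ P ∧ π (eC u) = π u) ∧
  (∀ u ∈ P, nC u ∈ P → π (nC u) = π u)

/-- `P` witnesses the insertion of the rim-hook `h` into `π`. -/
def InsertPath (lam : ℕ → ℕ) (π : Cell → ℕ) (h P : List Cell) : Prop :=
  IsNEPath lam P ∧ Compatible lam π P ∧ lst P = lst h ∧ len P = len h ∧
    IsRPP lam (addPath π P)

/-- The rim-hook `h` inserts into `π`. -/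
def Inserts (lam : ℕ → ℕ) (h : List Cell) (π : Cell → ℕ) : Prop :=
  ∃ P, InsertPath lam π h P

open Classical in
/-- `h * π`, the insertion of `h` into `π` (equal to `π` if `h` does not insert). -/
noncomputable def insertRH (lam : ℕ → ℕ) (h : List Cell) (π : Cell → ℕ) : Cell → ℕ :=
  if hP : Inserts lam h π then addPath π hP.choose else π

/-- `h₁ * h₂ * ⋯ * h_s * 0`. -/
noncomputable def insertList (lam : ℕ → ℕ) (hs : List (List Cell)) : Cell → ℕ :=
  hs.foldr (insertRH lam) (fun _ => 0)

/-- Reverse lexicographic order on rim-hooks. -/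
def RHle (f h : List Cell) : Prop :=
  content (hd h) < content (hd f) ∨
    (content (hd f) = content (hd h) ∧ content (lst f) ≤ content (lst h))

/-- Reverse lexicographic order on cells. -/
def revlexLE (u v : Cell) : Prop := v.2 < u.2 ∨ (u.2 = v.2 ∧ v.1 ≤ u.1)

/-- Content order on cells: `u ⊴ v`. -/
def contentLE (u v : Cell) : Prop :=
  content v < content u ∨ (content u = content v ∧ v.1 ≤ u.1)

/-- The set of candidates of `π`. -/
def candidates (lam : ℕ → ℕ) (π : Cell → ℕ) : Set Cell :=
  {u ∈ regionO lam | π (wC u) < π u} ∪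
    {u ∈ regionA lam | π (wC u) < π u ∧ π (nC u) < π u}

/-- One step of the path `Q(π,u)`. -/
def QStep (lam : ℕ → ℕ) (π : Cell → ℕ) (v v' : Cell) : Prop :=
  (v ∈ regionO lam ∪ regionB lam ∧ π (nC v) = π v ∧ v' = nC v) ∨
  ((v ∈ regionI lam ∪ regionA lam ∨ (π (nC v) < π v ∧ eC v ∈ cells lam)) ∧ v' = eC v)

/-- `P` is the path `Q(π,u)`: starts at `u`, follows the `Q`-steps, and terminates
when `π(n v) < π(v)` and `e v ∉ lam`. -/
def IsQPath (lam : ℕ → ℕ) (π : Cell → ℕ) (u : Cell) (P : List Cell) : Prop :=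
  P ≠ [] ∧ (∀ v ∈ P, v ∈ cells lam) ∧ hd P = u ∧ List.Chain' (QStep lam π) P ∧
    π (nC (lst P)) < π (lst P) ∧ eC (lst P) ∉ cells lam

lemma chain_content_step (lam : ℕ → ℕ) :
    ∀ P : List Cell, (∀ u ∈ P, u ∈ cells lam) →
      List.Chain' (fun u v => v = nC u ∨ v = eC u) P →
      List.Chain' (fun a b : Cell => content b = content a + 1) P := by
  intro P
  induction P with
  | nil => intro _ _; exact List.isChain_nil
  | cons a t ih =>
    intro hmem hc
    cases t with
    | nil => exact List.isChain_singleton a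
    | cons b t' =>
      unfold List.Chain' at hc ⊢
      rw [List.isChain_cons_cons] at hc ⊢
      refine ⟨?_, ih (fun u hu => hmem u (List.mem_cons_of_mem a hu)) hc.2⟩
      have hb : b ∈ cells lam := hmem b (by simp)
      rcases hc.1 with hb' | hb'
      · subst hb'
        have h1 : 1 ≤ a.1 - 1 := hb.1
        simp only [content, nC]
        omega
      · subst hb'
        simp only [content, eC]
        push_cast
        ring

lemma chain_contents_Icc :
    ∀ P : List Cell, P ≠ [] →
      List.Chain' (fun a b : Cell => content b = content a + 1) P →
      {z : ℤ | ∃ v ∈ P, content v = z} = Set.Icc (content (hd P)) (content (lst P)) := by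
  intro P
  induction P with
  | nil => intro h; exact absurd rfl h
  | cons a t ih =>
    intro _ hc
    cases t with
    | nil =>
      ext z
      constructor
      · rintro ⟨v, hv, rfl⟩
        rw [List.mem_singleton] at hv; subst hv
        exact ⟨le_refl _, le_refl _⟩
      · rintro ⟨h1, h2⟩
        exact ⟨a, List.mem_singleton_self a, le_antisymm h1 h2⟩
    | cons b t' =>
      unfold List.Chain' at hc
      rw [List.isChain_cons_cons] at hc
      have hIH := ih (by simp) hc.2
      have hhd : hd (b :: t') = b := rfl
      have hlst : lst (a :: b :: t') = lst (b :: t') := by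
        simp [lst, List.getLastD_cons]
      have hbmem : content b ∈ Set.Icc (content (hd (b :: t'))) (content (lst (b :: t'))) := by
        rw [← hIH]; exact ⟨b, by simp, rfl⟩
      rw [hhd] at hbmem
      have hA : content (hd (a :: b :: t')) = content a := rfl
      have hc1 := hc.1
      ext z
      constructor
      · rintro ⟨v, hv, rfl⟩
        rcases List.mem_cons.mp hv with rfl | hv
        · rw [hlst]
          constructor
          · rfl
          · have := hbmem.2; omega
        · have : content v ∈ Set.Icc (content (hd (b :: t'))) (content (lst (b :: t'))) := by
            rw [← hIH]; exact ⟨v, hv, rfl⟩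
          rw [hhd] at this
          rw [hlst]
          have h3 := this.1
          exact ⟨by omega, this.2⟩
      · rintro ⟨h1, h2⟩
        rw [hlst] at h2
        by_cases hz : z = content a
        · exact ⟨a, by simp, hz.symm⟩
        · have : z ∈ Set.Icc (content (hd (b :: t'))) (content (lst (b :: t'))) := by
            rw [hhd]; constructor <;> [omega; exact h2]
          rw [← hIH] at this
          obtain ⟨v, hv, hvz⟩ := this
          exact ⟨v, List.mem_cons_of_mem a hv, hvz⟩

/-- The contents of the cells of the rim-hook corresponding to `(i,j)` form the
interval `{j - lam'_j, …, lam_i - i}`. -/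
theorem rimHook_contents (lam : ℕ → ℕ) (hlam : IsPartition lam)
    (u : Cell) (hu : u ∈ cells lam) (h : List Cell) (hh : IsRimHook lam h)
    (hhd : hd h = (conj lam u.2, u.2)) (hlst : lst h = (u.1, lam u.1)) :
    {z : ℤ | ∃ v ∈ h, content v = z} =
      Set.Icc ((u.2 : ℤ) - (conj lam u.2 : ℤ)) ((lam u.1 : ℤ) - (u.1 : ℤ)) := by
  obtain ⟨⟨hne, hmem, hchain⟩, _, _, _⟩ := hh
  have := chain_contents_Icc h hne (chain_content_step lam h hmem hchain)
  rw [this, hhd, hlst]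
  simp [content]
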